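/- Optimality of the SVD truncation: let S ∈ ℝ^{N×M} with singular value decomposition S = UΣZᵀ, singular values σ₁ ≥ σ₂ ≥ … ≥ 0, and columns s₁,…,s_M. For any N' ≤ min(N,M), the subspace V spanned by the first N' left singular vectors satisfies ∑_{i=1}^{M} ‖s_i − P_V(s_i)‖² = min over all subspaces W of dimension ≤ N' of ∑_{i=1}^M ‖s_i − P_W(s_i)‖² = ∑_{k>N'} σ_k², where P_V denotes orthogonal projection onto V. -/

import Mathlib

open Matrix

open Finset
open scoped RealInnerProductSpace

lemma aux_inner {n : ℕ} (x y : EuclideanSpace ℝ (Fin n)) : ⟪x, y⟫ = ∑ j, x j * y j := by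
  simp [PiLp.inner_apply, RCLike.inner_apply, conj_trivial, mul_comm]

lemma aux_resid {n : ℕ} (K : Submodule ℝ (EuclideanSpace ℝ (Fin n))) (x : EuclideanSpace ℝ (Fin n)) :
    ‖x - (Submodule.orthogonalProjectionOnto K x : EuclideanSpace ℝ (Fin n))‖ ^ 2
      = ‖x‖ ^ 2 - ‖(Submodule.orthogonalProjectionOnto K x : EuclideanSpace ℝ (Fin n))‖ ^ 2 := by
  have h : ⟪x - (Submodule.orthogonalProjectionOnto K x : EuclideanSpace ℝ (Fin n)),
      (Submodule.orthogonalProjectionOnto K x : EuclideanSpace ℝ (Fin n))⟫ = 0 :=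
    Submodule.starProjection_inner_eq_zero x _ (Submodule.orthogonalProjectionOnto K x).2
  have := norm_add_sq_real (x - (Submodule.orthogonalProjectionOnto K x : EuclideanSpace ℝ (Fin n)))
    (Submodule.orthogonalProjectionOnto K x : EuclideanSpace ℝ (Fin n))
  simp only [sub_add_cancel, h] at this
  linarith

lemma aux_norm_sum {E : Type*} [NormedAddCommGroup E] [InnerProductSpace ℝ E]
    {ι : Type*} [Fintype ι] [DecidableEq ι] {w : ι → E} (hw : Orthonormal ℝ w) (c : ι → ℝ) :
    ‖∑ i, c i • w i‖ ^ 2 = ∑ i, c i ^ 2 := by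
  rw [← real_inner_self_eq_norm_sq]
  rw [sum_inner]
  simp only [inner_sum, real_inner_smul_left, real_inner_smul_right]
  rw [Finset.sum_congr rfl (fun i _ => Finset.sum_congr rfl (fun j _ => by
    rw [orthonormal_iff_ite.mp hw i j]))]
  simp only [mul_ite, mul_one, mul_zero, Finset.sum_ite_eq, Finset.mem_univ, if_true]
  exact Finset.sum_congr rfl fun i _ => (sq (c i)).symm ▸ (sq (c i)) ▸ rfl

lemma aux_rearr {n n' : ℕ} (hn : n' ≤ n) (a : ℕ → ℝ) (t : Fin n → ℝ)
    (ha0 : ∀ k, 0 ≤ a k) (hmono : ∀ k l : ℕ, k ≤ l → a l ≤ a k)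
    (ht0 : ∀ k, 0 ≤ t k) (ht1 : ∀ k, t k ≤ 1)
    (hsum : ∑ k, t k ≤ (n' : ℝ)) :
    ∑ k : Fin n, a (k : ℕ) * t k ≤ ∑ k ∈ Finset.range n', a k := by
  set c := a n' with hc
  have h1 : ∀ k : Fin n, (a (k : ℕ) - c) * t k ≤ if (k : ℕ) < n' then a (k : ℕ) - c else 0 := by
    intro k
    by_cases h : (k : ℕ) < n'
    · rw [if_pos h]
      have : 0 ≤ a (k : ℕ) - c := by
        have := hmono k n' (le_of_lt h)
        linarith
      nlinarith [ht0 k, ht1 k]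
    · rw [if_neg h]
      have : a (k : ℕ) - c ≤ 0 := by
        have := hmono n' k (le_of_not_gt h)
        linarith
      nlinarith [ht0 k]
  have h2 : ∑ k : Fin n, (a (k : ℕ) - c) * t k ≤ ∑ k ∈ Finset.range n', (a k - c) := by
    calc ∑ k : Fin n, (a (k : ℕ) - c) * t k
        ≤ ∑ k : Fin n, (if (k : ℕ) < n' then a (k : ℕ) - c else 0) := Finset.sum_le_sum fun k _ => h1 k
      _ = ∑ k ∈ Finset.range n, (if k < n' then a k - c else 0) :=
          Fin.sum_univ_eq_sum_range (fun k => if k < n' then a k - c else 0) n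
      _ = ∑ k ∈ Finset.range n', (a k - c) := by
          rw [← Finset.sum_filter]
          congr 1
          ext x
          simp only [Finset.mem_filter, Finset.mem_range]
          omega
  have h3 : ∑ k : Fin n, a (k : ℕ) * t k = ∑ k : Fin n, (a (k : ℕ) - c) * t k + c * ∑ k, t k := by
    rw [Finset.mul_sum, ← Finset.sum_add_distrib]
    congr 1; ext k; ring
  have h4 : c * ∑ k, t k ≤ c * n' := mul_le_mul_of_nonneg_left hsum (ha0 n')
  have h5 : ∑ k ∈ Finset.range n', (a k - c) = (∑ k ∈ Finset.range n', a k) - n' * c := by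
    rw [Finset.sum_sub_distrib]
    simp [mul_comm]
  linarith


/-- The `i`-th column of a matrix viewed as a vector of the Euclidean space. -/
noncomputable def matCol {N M : ℕ} (S : Matrix (Fin N) (Fin M) ℝ) (i : Fin M) :
    EuclideanSpace ℝ (Fin N) :=
  (WithLp.equiv 2 (Fin N → ℝ)).symm (fun j => S j i)

/-- Optimality of the SVD truncation (Eckart–Young, column form): if `S = U Σ Zᵀ` with
`U, Z` orthogonal and `Σ` the rectangular diagonal matrix of nonincreasing nonnegative
singular values `σ`, then for `N' ≤ min N M` the span `V` of the first `N'` left singular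
vectors minimizes `∑ᵢ ‖sᵢ − P_W sᵢ‖²` over all subspaces `W` of dimension `≤ N'`, with
minimum value `∑_{k ≥ N'} σ_k²`. -/
theorem eckart_young_columns {N M : ℕ}
    (S : Matrix (Fin N) (Fin M) ℝ)
    (U : Matrix (Fin N) (Fin N) ℝ) (Z : Matrix (Fin M) (Fin M) ℝ)
    (σ : ℕ → ℝ)
    (hU : Uᵀ * U = 1 ∧ U * Uᵀ = 1) (hZ : Zᵀ * Z = 1 ∧ Z * Zᵀ = 1)
    (hσ_nonneg : ∀ k, 0 ≤ σ k) (hσ_mono : ∀ k, σ (k + 1) ≤ σ k)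
    (hSVD : S = U * (Matrix.of fun (i : Fin N) (j : Fin M) =>
      if (i : ℕ) = (j : ℕ) then σ i else 0) * Zᵀ)
    (N' : ℕ) (hN' : N' ≤ min N M)
    (V : Submodule ℝ (EuclideanSpace ℝ (Fin N)))
    (hV : V = Submodule.span ℝ
      (Set.range fun k : Fin N' => matCol U (Fin.castLE (le_trans hN' (min_le_left _ _)) k))) :
    (∀ W : Submodule ℝ (EuclideanSpace ℝ (Fin N)), Module.finrank ℝ W ≤ N' →
      ∑ i : Fin M, ‖matCol S i - (Submodule.orthogonalProjectionOnto V (matCol S i) : EuclideanSpace ℝ (Fin N))‖ ^ 2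
        ≤ ∑ i : Fin M, ‖matCol S i - (Submodule.orthogonalProjectionOnto W (matCol S i) : EuclideanSpace ℝ (Fin N))‖ ^ 2) ∧
    ∑ i : Fin M, ‖matCol S i - (Submodule.orthogonalProjectionOnto V (matCol S i) : EuclideanSpace ℝ (Fin N))‖ ^ 2
      = ∑ k ∈ Finset.Ico N' (min N M), σ k ^ 2 := by
  obtain ⟨hU1, hU2⟩ := hU
  obtain ⟨hZ1, hZ2⟩ := hZ
  set Sig : Matrix (Fin N) (Fin M) ℝ :=
    Matrix.of fun (i : Fin N) (j : Fin M) => if (i : ℕ) = (j : ℕ) then σ i else 0 with hSig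
  set D : Matrix (Fin N) (Fin M) ℝ := Sig * Zᵀ with hDdef
  have hS : S = U * D := by rw [hSVD, hDdef, Matrix.mul_assoc]
  set a : ℕ → ℝ := fun k => if k < M then σ k ^ 2 else 0 with ha
  -- D * Dᵀ is diagonal with entries a
  have hDDt : D * Dᵀ = Sig * Sigᵀ := by
    rw [hDdef, Matrix.transpose_mul, Matrix.transpose_transpose, Matrix.mul_assoc,
      ← Matrix.mul_assoc Zᵀ Z Sigᵀ, hZ1, Matrix.one_mul]
  have hDD : ∀ k l : Fin N, (∑ i : Fin M, D k i * D l i) = if k = l then a (k : ℕ) else 0 := by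
    intro k l
    have h1 : (D * Dᵀ) k l = ∑ i : Fin M, D k i * D l i := by
      rw [Matrix.mul_apply]; rfl
    rw [← h1, hDDt, Matrix.mul_apply]
    by_cases hkl : k = l
    · subst hkl
      rw [if_pos rfl]
      by_cases hkM : (k : ℕ) < M
      · have : ∀ j : Fin M, Sig k j * Sigᵀ j k = if j = (⟨(k : ℕ), hkM⟩ : Fin M) then σ (k : ℕ) ^ 2 else 0 := by
          intro j
          simp only [hSig, Matrix.transpose_apply, Matrix.of_apply]
          by_cases h : (k : ℕ) = (j : ℕ)
          · rw [if_pos h, if_pos (show j = (⟨(k : ℕ), hkM⟩ : Fin M) from Fin.ext h.symm)]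
            ring
          · rw [if_neg h, if_neg (show j ≠ (⟨(k : ℕ), hkM⟩ : Fin M) from fun h' => h (by rw [h']))]
            ring
        rw [Finset.sum_congr rfl fun j _ => this j, Finset.sum_ite_eq' Finset.univ _ _]
        simp [ha, hkM]
      · have hz : ∑ j : Fin M, Sig k j * Sigᵀ j k = 0 := by
          apply Finset.sum_eq_zero
          intro j _
          have : (k : ℕ) ≠ (j : ℕ) := by omega
          simp [hSig, this]
        rw [hz]
        simp [ha, hkM]
    · rw [if_neg hkl]
      apply Finset.sum_eq_zero
      intro j _
      simp only [hSig, Matrix.transpose_apply, Matrix.of_apply]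
      by_cases h : (k : ℕ) = (j : ℕ)
      · have h2 : ¬ ((l : ℕ) = (j : ℕ)) := fun h' => hkl (Fin.ext (h.trans h'.symm))
        rw [if_neg h2, mul_zero]
      · rw [if_neg h, zero_mul]
  -- coordinates
  have hmc : ∀ (P : ℕ) (A : Matrix (Fin N) (Fin P) ℝ) (i : Fin P) (j : Fin N),
      matCol A i j = A j i := fun _ _ _ _ => rfl
  set β : EuclideanSpace ℝ (Fin N) → Fin N → ℝ := fun w k => ∑ j, U j k * w j with hβ
  have hUU : ∀ j j' : Fin N, (∑ k, U j k * U j' k) = if j = j' then 1 else 0 := by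
    intro j j'
    have : (U * Uᵀ) j j' = ∑ k, U j k * U j' k := by rw [Matrix.mul_apply]; rfl
    rw [← this, hU2, Matrix.one_apply]
  have hUtU : ∀ k l : Fin N, (∑ j, U j k * U j l) = if k = l then 1 else 0 := by
    intro k l
    have : (Uᵀ * U) k l = ∑ j, U j k * U j l := by
      rw [Matrix.mul_apply]; rfl
    rw [← this, hU1, Matrix.one_apply]
  have hβ_inner : ∀ (w : EuclideanSpace ℝ (Fin N)) (k : Fin N),
      β w k = ⟪matCol U k, w⟫ := by
    intro w k
    rw [aux_inner]
    exact Finset.sum_congr rfl fun j _ => by rw [hmc]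
  have hcolU : ∀ k l : Fin N, ⟪matCol U k, matCol U l⟫ = if k = l then 1 else 0 := by
    intro k l
    rw [aux_inner]
    rw [← hUtU k l]
    exact Finset.sum_congr rfl fun j _ => by rw [hmc, hmc]
  have horthU : Orthonormal ℝ (matCol U) := orthonormal_iff_ite.mpr hcolU
  -- Parseval
  have hParseval : ∀ w : EuclideanSpace ℝ (Fin N), ∑ k, (β w k) ^ 2 = ‖w‖ ^ 2 := by
    intro w
    have e1 : ∀ k : Fin N, (β w k) ^ 2 = ∑ j, ∑ j', (w j * w j') * (U j k * U j' k) := by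
      intro k
      rw [hβ, sq, Finset.sum_mul_sum]
      exact Finset.sum_congr rfl fun j _ => Finset.sum_congr rfl fun j' _ => by ring
    rw [Finset.sum_congr rfl fun k _ => e1 k]
    rw [Finset.sum_comm]
    have e2 : ∀ j : Fin N, ∑ k, ∑ j', (w j * w j') * (U j k * U j' k)
        = ∑ j', (w j * w j') * (if j = j' then 1 else 0) := by
      intro j
      rw [Finset.sum_comm]
      exact Finset.sum_congr rfl fun j' _ => by rw [← Finset.mul_sum, hUU j j']
    rw [Finset.sum_congr rfl fun j _ => e2 j]
    rw [← real_inner_self_eq_norm_sq, aux_inner]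
    exact Finset.sum_congr rfl fun j _ => by simp
  -- spectral sum
  have hSapp : ∀ (j : Fin N) (i : Fin M), S j i = ∑ k, U j k * D k i := by
    intro j i; rw [hS, Matrix.mul_apply]
  have hinnerS : ∀ (w : EuclideanSpace ℝ (Fin N)) (i : Fin M),
      ⟪w, matCol S i⟫ = ∑ k, β w k * D k i := by
    intro w i
    rw [aux_inner]
    have e1 : ∀ j : Fin N, w j * matCol S i j = ∑ k, (U j k * w j) * D k i := by
      intro j
      rw [hmc, hSapp, Finset.mul_sum]
      exact Finset.sum_congr rfl fun k _ => by ring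
    rw [Finset.sum_congr rfl fun j _ => e1 j, Finset.sum_comm]
    refine Finset.sum_congr rfl fun k _ => ?_
    rw [hβ, ← Finset.sum_mul]
  have hspec : ∀ w : EuclideanSpace ℝ (Fin N),
      ∑ i : Fin M, ⟪w, matCol S i⟫ ^ 2 = ∑ k : Fin N, a (k : ℕ) * (β w k) ^ 2 := by
    intro w
    have e1 : ∀ i : Fin M, ⟪w, matCol S i⟫ ^ 2
        = ∑ k, ∑ l, (β w k * β w l) * (D k i * D l i) := by
      intro i
      rw [hinnerS, sq, Finset.sum_mul_sum]
      exact Finset.sum_congr rfl fun k _ => Finset.sum_congr rfl fun l _ => by ring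
    rw [Finset.sum_congr rfl fun i _ => e1 i, Finset.sum_comm]
    have e2 : ∀ k : Fin N, ∑ i : Fin M, ∑ l, (β w k * β w l) * (D k i * D l i)
        = ∑ l, (β w k * β w l) * (if k = l then a (k : ℕ) else 0) := by
      intro k
      rw [Finset.sum_comm]
      refine Finset.sum_congr rfl fun l _ => ?_
      rw [← hDD k l]
      exact (Finset.mul_sum _ _ _).symm
    rw [Finset.sum_congr rfl fun k _ => e2 k]
    refine Finset.sum_congr rfl fun k _ => ?_
    simp [sq]
    ring
  -- basis coordinates of columns of U
  have hβU : ∀ k l : Fin N, β (matCol U k) l = if l = k then 1 else 0 := by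
    intro k l
    rw [hβ_inner, hcolU]
  have hak : ∀ kk : Fin N, ∑ i : Fin M, ⟪matCol U kk, matCol S i⟫ ^ 2 = a (kk : ℕ) := by
    intro kk
    rw [hspec (matCol U kk)]
    calc ∑ l : Fin N, a (l : ℕ) * β (matCol U kk) l ^ 2
        = ∑ l : Fin N, if l = kk then a (l : ℕ) else 0 := by
          refine Finset.sum_congr rfl fun l _ => ?_
          rw [hβU kk l]
          by_cases h : l = kk <;> simp [h]
      _ = a (kk : ℕ) := by rw [Finset.sum_ite_eq' Finset.univ kk]; simp
  -- Frobenius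
  have hfrob : ∑ i : Fin M, ‖matCol S i‖ ^ 2 = ∑ k ∈ Finset.range N, a k := by
    calc ∑ i : Fin M, ‖matCol S i‖ ^ 2
        = ∑ i : Fin M, ∑ k : Fin N, (β (matCol S i) k) ^ 2 :=
          Finset.sum_congr rfl fun i _ => (hParseval _).symm
      _ = ∑ k : Fin N, ∑ i : Fin M, (β (matCol S i) k) ^ 2 := Finset.sum_comm
      _ = ∑ k : Fin N, ∑ i : Fin M, ⟪matCol U k, matCol S i⟫ ^ 2 := by
          refine Finset.sum_congr rfl fun k _ => Finset.sum_congr rfl fun i _ => by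
            rw [hβ_inner]
      _ = ∑ k : Fin N, a (k : ℕ) := Finset.sum_congr rfl fun k _ => hak k
      _ = ∑ k ∈ Finset.range N, a k := Fin.sum_univ_eq_sum_range _ _
  have hNN : N' ≤ N := le_trans hN' (min_le_left _ _)
  have hIco : ∑ k ∈ Finset.range N, a k - ∑ k ∈ Finset.range N', a k
      = ∑ k ∈ Finset.Ico N' (min N M), σ k ^ 2 := by
    rw [← Finset.sum_Ico_eq_sub _ hNN]
    have e1 : ∀ k ∈ Finset.Ico N' N, a k = if k < M then σ k ^ 2 else 0 := fun k _ => rfl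
    rw [Finset.sum_congr rfl e1, ← Finset.sum_filter]
    congr 1
    ext x
    simp only [Finset.mem_filter, Finset.mem_Ico, lt_min_iff]
    omega
  -- the subspace V
  set v : Fin N' → EuclideanSpace ℝ (Fin N) := fun k => matCol U (Fin.castLE hNN k) with hvdef
  have hV' : V = Submodule.span ℝ (Set.range v) := hV
  have horthv : Orthonormal ℝ v := horthU.comp _ (Fin.castLE_injective hNN)
  have hPV : ∀ x : EuclideanSpace ℝ (Fin N),
      (Submodule.orthogonalProjectionOnto V x : EuclideanSpace ℝ (Fin N)) = ∑ k, ⟪v k, x⟫ • v k := by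
    intro x
    apply Submodule.eq_starProjection_of_mem_of_inner_eq_zero
    · rw [hV']
      exact Submodule.sum_mem _ fun k _ =>
        Submodule.smul_mem _ _ (Submodule.subset_span ⟨k, rfl⟩)
    · intro y hy
      rw [hV'] at hy
      induction hy using Submodule.span_induction with
      | mem z hz =>
          obtain ⟨k₀, rfl⟩ := hz
          rw [inner_sub_left, sum_inner]
          rw [Finset.sum_congr rfl (fun k _ => by
            rw [real_inner_smul_left, orthonormal_iff_ite.mp horthv k k₀])]
          simp only [mul_ite, mul_one, mul_zero, Finset.sum_ite_eq', Finset.mem_univ, if_true]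
          rw [real_inner_comm]
          ring
      | zero => simp
      | add w₁ w₂ _ _ h1 h2 => rw [inner_add_right, h1, h2, add_zero]
      | smul r w₁ _ h1 => rw [real_inner_smul_right, h1, mul_zero]
  have hPVnorm : ∀ x : EuclideanSpace ℝ (Fin N),
      ‖(Submodule.orthogonalProjectionOnto V x : EuclideanSpace ℝ (Fin N))‖ ^ 2 = ∑ k : Fin N', ⟪v k, x⟫ ^ 2 :=
    fun x => by rw [hPV]; exact aux_norm_sum horthv _
  have hsumPV : ∑ i : Fin M,
      ‖(Submodule.orthogonalProjectionOnto V (matCol S i) : EuclideanSpace ℝ (Fin N))‖ ^ 2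
        = ∑ k ∈ Finset.range N', a k := by
    calc ∑ i : Fin M, ‖(Submodule.orthogonalProjectionOnto V (matCol S i) : EuclideanSpace ℝ (Fin N))‖ ^ 2
        = ∑ i : Fin M, ∑ k : Fin N', ⟪v k, matCol S i⟫ ^ 2 :=
          Finset.sum_congr rfl fun i _ => hPVnorm _
      _ = ∑ k : Fin N', ∑ i : Fin M, ⟪v k, matCol S i⟫ ^ 2 := Finset.sum_comm
      _ = ∑ k : Fin N', a (k : ℕ) := by
          refine Finset.sum_congr rfl fun k _ => ?_
          rw [hvdef]
          rw [hak (Fin.castLE hNN k)]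
          simp
      _ = ∑ k ∈ Finset.range N', a k := Fin.sum_univ_eq_sum_range _ _
  have hVval : ∑ i : Fin M,
      ‖matCol S i - (Submodule.orthogonalProjectionOnto V (matCol S i) : EuclideanSpace ℝ (Fin N))‖ ^ 2
        = ∑ k ∈ Finset.Ico N' (min N M), σ k ^ 2 := by
    rw [Finset.sum_congr rfl fun i _ => aux_resid V (matCol S i)]
    rw [Finset.sum_sub_distrib, hfrob, hsumPV, hIco]
  -- antitone and nonneg of a
  have ha0 : ∀ k, 0 ≤ a k := by
    intro k
    rw [ha]
    dsimp only
    split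
    · exact sq_nonneg _
    · exact le_refl 0
  have hσanti : Antitone σ := antitone_nat_of_succ_le hσ_mono
  have hamono : ∀ k l : ℕ, k ≤ l → a l ≤ a k := by
    intro k l hkl
    rw [ha]
    dsimp only
    by_cases hl : l < M
    · rw [if_pos hl, if_pos (lt_of_le_of_lt hkl hl)]
      exact pow_le_pow_left₀ (hσ_nonneg l) (hσanti hkl) 2
    · rw [if_neg hl]
      exact ha0 k
  refine ⟨?_, hVval⟩
  -- optimality
  intro W hW
  set b := stdOrthonormalBasis ℝ W with hb
  set wv : Fin (Module.finrank ℝ W) → EuclideanSpace ℝ (Fin N) := fun j => (b j : EuclideanSpace ℝ (Fin N)) with hwv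
  have horthw : Orthonormal ℝ wv := W.subtypeₗᵢ.orthonormal_comp_iff.mpr b.orthonormal
  have hPW : ∀ x : EuclideanSpace ℝ (Fin N),
      (Submodule.orthogonalProjectionOnto W x : EuclideanSpace ℝ (Fin N)) = ∑ j, ⟪wv j, x⟫ • wv j := by
    intro x
    rw [OrthonormalBasis.orthogonalProjectionOnto_apply_eq_sum b x]
    push_cast
    rfl
  have hPWnorm : ∀ x : EuclideanSpace ℝ (Fin N),
      ‖(Submodule.orthogonalProjectionOnto W x : EuclideanSpace ℝ (Fin N))‖ ^ 2 = ∑ j, ⟪wv j, x⟫ ^ 2 :=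
    fun x => by rw [hPW]; exact aux_norm_sum horthw _
  set t : Fin N → ℝ := fun k => ∑ j, (β (wv j) k) ^ 2 with htdef
  have ht0 : ∀ k, 0 ≤ t k := fun k => Finset.sum_nonneg fun j _ => sq_nonneg _
  have ht1 : ∀ k, t k ≤ 1 := by
    intro k
    have hb2 : ∑ j, ‖⟪wv j, matCol U k⟫‖ ^ 2 ≤ ‖matCol U k‖ ^ 2 :=
      horthw.sum_inner_products_le (matCol U k)
    have hn1 : ‖matCol U k‖ = 1 := horthU.1 k
    rw [hn1, one_pow] at hb2
    calc t k = ∑ j, (β (wv j) k) ^ 2 := rfl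
      _ = ∑ j, ‖⟪wv j, matCol U k⟫‖ ^ 2 := by
          refine Finset.sum_congr rfl fun j _ => ?_
          rw [hβ_inner, real_inner_comm, Real.norm_eq_abs, sq_abs]
      _ ≤ 1 := hb2
  have htsum : ∑ k, t k ≤ (N' : ℝ) := by
    have e1 : ∑ k, t k = (Module.finrank ℝ W : ℝ) := by
      calc ∑ k : Fin N, t k = ∑ k : Fin N, ∑ j, (β (wv j) k) ^ 2 := rfl
        _ = ∑ j, ∑ k : Fin N, (β (wv j) k) ^ 2 := Finset.sum_comm
        _ = ∑ j, ‖wv j‖ ^ 2 := Finset.sum_congr rfl fun j _ => hParseval _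
        _ = ∑ j : Fin (Module.finrank ℝ W), (1 : ℝ) := by
            refine Finset.sum_congr rfl fun j _ => ?_
            rw [horthw.1 j, one_pow]
        _ = (Module.finrank ℝ W : ℝ) := by simp
    rw [e1]
    exact_mod_cast hW
  have hineq := aux_rearr hNN a t ha0 hamono ht0 ht1 htsum
  have hWform : ∑ i : Fin M,
      ‖matCol S i - (Submodule.orthogonalProjectionOnto W (matCol S i) : EuclideanSpace ℝ (Fin N))‖ ^ 2
        = ∑ k ∈ Finset.range N, a k - ∑ k : Fin N, a (k : ℕ) * t k := by
    rw [Finset.sum_congr rfl fun i _ => aux_resid W (matCol S i)]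
    rw [Finset.sum_sub_distrib, hfrob]
    congr 1
    calc ∑ i : Fin M, ‖(Submodule.orthogonalProjectionOnto W (matCol S i) : EuclideanSpace ℝ (Fin N))‖ ^ 2
        = ∑ i : Fin M, ∑ j, ⟪wv j, matCol S i⟫ ^ 2 := Finset.sum_congr rfl fun i _ => hPWnorm _
      _ = ∑ j, ∑ i : Fin M, ⟪wv j, matCol S i⟫ ^ 2 := Finset.sum_comm
      _ = ∑ j, ∑ k : Fin N, a (k : ℕ) * (β (wv j) k) ^ 2 :=
          Finset.sum_congr rfl fun j _ => hspec _
      _ = ∑ k : Fin N, ∑ j, a (k : ℕ) * (β (wv j) k) ^ 2 := Finset.sum_comm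
      _ = ∑ k : Fin N, a (k : ℕ) * t k := by
          refine Finset.sum_congr rfl fun k _ => ?_
          rw [htdef]
          exact (Finset.mul_sum _ _ _).symm
  rw [hVval, hWform, ← hIco]
  linarith [hineq]
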